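/- arXiv:1406.3378 — 3 statements merged into one kernel-verified Lean document; each statement's English description precedes it below -/
import Mathlib

section
/- For every partial recursive function f : ℕ^k ⇀ ℕ, the probabilistic function p_f : ℕ^k → 𝒫(ℕ), defined by p_f(x⃗)(y) = 1 if f(x⃗) is defined and equal to y, and p_f(x⃗)(y) = 0 otherwise, is probabilistic recursive (p_f ∈ PR). -/
noncomputable section
open scoped Classical

/-- A pseudodistribution on ℕ: pointwise nonnegative, summable, with total mass at most 1. -/
def IsPseudoDist (D : ℕ → ℝ) : Prop :=
  (∀ n, 0 ≤ D n) ∧ Summable D ∧ ∑' n, D n ≤ 1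

/-- Generalized composition:
(f ⊙ (g₁,…,gₙ))(x⃗)(y) = ∑_{z⃗} f(z⃗)(y) · ∏ᵢ gᵢ(x⃗)(zᵢ). -/
noncomputable def genComp {n k : ℕ} (f : (Fin n → ℕ) → ℕ → ℝ)
    (g : Fin n → (Fin k → ℕ) → ℕ → ℝ) : (Fin k → ℕ) → ℕ → ℝ :=
  fun x y => ∑' z : Fin n → ℕ, f z y * ∏ i, g i x (z i)

/-- Auxiliary for primitive recursion: h(x⃗,0) = f(x⃗),
h(x⃗,y+1)(w) = ∑_z g(x⃗,y,z)(w) · h(x⃗,y)(z). -/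
noncomputable def primRecAux {k : ℕ} (f : (Fin k → ℕ) → ℕ → ℝ)
    (g : (Fin (k + 2) → ℕ) → ℕ → ℝ) (x : Fin k → ℕ) : ℕ → ℕ → ℝ
  | 0 => f x
  | y + 1 => fun w =>
      ∑' z : ℕ, g (Fin.snoc (Fin.snoc x y) z) w * primRecAux f g x y z

/-- Primitive recursion of probabilistic functions, as a function on ℕ^(k+1). -/
noncomputable def primRec {k : ℕ} (f : (Fin k → ℕ) → ℕ → ℝ)
    (g : (Fin (k + 2) → ℕ) → ℕ → ℝ) : (Fin (k + 1) → ℕ) → ℕ → ℝ :=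
  fun v => primRecAux f g (Fin.init v) (v (Fin.last k))

/-- Minimization: (μf)(x⃗)(y) = f(x⃗,y)(0) · ∏_{z<y} (∑_{k>0} f(x⃗,z)(k)). -/
noncomputable def minimize {k : ℕ} (f : (Fin (k + 1) → ℕ) → ℕ → ℝ) :
    (Fin k → ℕ) → ℕ → ℝ :=
  fun x y =>
    f (Fin.snoc x y) 0 *
      ∏ z ∈ Finset.range y, ∑' m : {m : ℕ // 0 < m}, f (Fin.snoc x z) (m : ℕ)

/-- The class PR of probabilistic recursive functions: the smallest class of
probabilistic functions containing the basic probabilistic functions (zero,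
successor, projections, fair coin) and closed under generalized composition,
primitive recursion and minimization. -/
inductive PR : {k : ℕ} → ((Fin k → ℕ) → ℕ → ℝ) → Prop where
  /-- The zero function z(n) = Dirac(0). -/
  | zero : PR (fun (_ : Fin 1 → ℕ) (y : ℕ) => if y = 0 then (1 : ℝ) else 0)
  /-- The successor function s(n) = Dirac(n+1). -/
  | succ : PR (fun (x : Fin 1 → ℕ) (y : ℕ) => if y = x 0 + 1 then (1 : ℝ) else 0)
  /-- The projections Πⁿₘ(x⃗) = Dirac(xₘ). -/
  | proj {n : ℕ} (m : Fin n) :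
      PR (fun (x : Fin n → ℕ) (y : ℕ) => if y = x m then (1 : ℝ) else 0)
  /-- The fair coin r(x), assigning probability 1/2 to each of x and x+1. -/
  | coin : PR (fun (x : Fin 1 → ℕ) (y : ℕ) =>
      if y = x 0 ∨ y = x 0 + 1 then (1 : ℝ) / 2 else 0)
  /-- Closure under generalized composition. -/
  | comp {n k : ℕ} {f : (Fin n → ℕ) → ℕ → ℝ} {g : Fin n → (Fin k → ℕ) → ℕ → ℝ} :
      PR f → (∀ i, PR (g i)) → PR (genComp f g)
  /-- Closure under primitive recursion. -/
  | primrec {k : ℕ} {f : (Fin k → ℕ) → ℕ → ℝ} {g : (Fin (k + 2) → ℕ) → ℕ → ℝ} :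
      PR f → PR g → PR (primRec f g)
  /-- Closure under minimization. -/
  | minim {k : ℕ} {f : (Fin (k + 1) → ℕ) → ℕ → ℝ} :
      PR f → PR (minimize f)


def Dirac {k : ℕ} (f : (Fin k → ℕ) →. ℕ) : (Fin k → ℕ) → ℕ → ℝ :=
  fun x y => if y ∈ f x then 1 else 0

lemma boole_mul_boole (P Q : Prop) [Decidable P] [Decidable Q] [Decidable (P ∧ Q)] :
    (if P then (1:ℝ) else 0) * (if Q then 1 else 0) = if P ∧ Q then 1 else 0 := by
  by_cases P <;> by_cases Q <;> simp [*]

lemma tsum_boole' {α : Type*} (P : α → Prop) [DecidablePred P] [Decidable (∃ a, P a)]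
    (h : ∀ a b, P a → P b → a = b) :
    ∑' a, (if P a then (1:ℝ) else 0) = if ∃ a, P a then 1 else 0 := by
  by_cases he : ∃ a, P a
  · obtain ⟨a₀, ha₀⟩ := he
    rw [tsum_eq_single a₀ fun b hb => if_neg fun hP => hb (h b a₀ hP ha₀)]
    rw [if_pos ha₀, if_pos ⟨a₀, ha₀⟩]
  · have h0 : ∀ a, (if P a then (1:ℝ) else 0) = 0 := fun a => if_neg fun hP => he ⟨a, hP⟩
    simp [h0, he]

/-- Partial composition of partial functions. -/
def pComp {n k : ℕ} (f : (Fin n → ℕ) →. ℕ) (g : Fin n → (Fin k → ℕ) →. ℕ) :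
    (Fin k → ℕ) →. ℕ :=
  fun x => Part.bind (⟨∀ i, (g i x).Dom, fun h i => (g i x).get (h i)⟩ : Part (Fin n → ℕ)) f

lemma mem_pComp {n k : ℕ} {f : (Fin n → ℕ) →. ℕ} {g : Fin n → (Fin k → ℕ) →. ℕ}
    {x : Fin k → ℕ} {y : ℕ} :
    y ∈ pComp f g x ↔ ∃ z : Fin n → ℕ, (∀ i, z i ∈ g i x) ∧ y ∈ f z := by
  simp only [pComp]
  refine Part.mem_bind_iff.trans ?_
  constructor
  · rintro ⟨z, hz, hy⟩
    obtain ⟨hd, hget⟩ := hz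
    exact ⟨z, fun i => hget ▸ Part.get_mem (hd i), hy⟩
  · rintro ⟨z, hz, hy⟩
    refine ⟨z, ⟨fun i => (hz i).fst, funext fun i => Part.get_eq_of_mem (hz i) _⟩, hy⟩

lemma genComp_dirac {n k : ℕ} (f : (Fin n → ℕ) →. ℕ) (g : Fin n → (Fin k → ℕ) →. ℕ) :
    genComp (Dirac f) (fun i => Dirac (g i)) = Dirac (pComp f g) := by
  funext x y
  show ∑' z : Fin n → ℕ, _ = _
  have step : ∀ z : Fin n → ℕ,
      Dirac f z y * ∏ i, Dirac (g i) x (z i)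
        = if (y ∈ f z ∧ ∀ i, z i ∈ g i x) then (1:ℝ) else 0 := by
    intro z
    simp only [Dirac]
    rw [Fintype.prod_boole, boole_mul_boole]
  rw [tsum_congr step, tsum_boole']
  · rw [Dirac]
    congr 1
    rw [eq_iff_iff, mem_pComp]
    constructor
    · rintro ⟨z, h1, h2⟩; exact ⟨z, h2, h1⟩
    · rintro ⟨z, h1, h2⟩; exact ⟨z, h2, h1⟩
  · rintro a b ⟨_, ha⟩ ⟨_, hb⟩
    exact funext fun i => Part.mem_unique (ha i) (hb i)


lemma PR_pComp {n k : ℕ} {f : (Fin n → ℕ) →. ℕ} {g : Fin n → (Fin k → ℕ) →. ℕ}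
    (hf : PR (Dirac f)) (hg : ∀ i, PR (Dirac (g i))) : PR (Dirac (pComp f g)) := by
  rw [← genComp_dirac]; exact PR.comp hf hg

lemma PR_proj {n : ℕ} (m : Fin n) : PR (Dirac (fun x : Fin n → ℕ => Part.some (x m))) := by
  have : Dirac (fun x : Fin n → ℕ => Part.some (x m))
      = fun (x : Fin n → ℕ) (y : ℕ) => if y = x m then (1:ℝ) else 0 := by
    funext x y; simp [Dirac, Part.mem_some_iff]
  rw [this]; exact PR.proj m

lemma PR_reindex {n k : ℕ} {f : (Fin n → ℕ) →. ℕ} (hf : PR (Dirac f))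
    (σ : Fin n → Fin k) : PR (Dirac (fun x : Fin k → ℕ => f (fun i => x (σ i)))) := by
  have h := PR_pComp (g := fun i => (fun x : Fin k → ℕ => Part.some (x (σ i)))) hf
    (fun i => PR_proj (σ i))
  have e : pComp f (fun i => (fun x : Fin k → ℕ => Part.some (x (σ i))))
      = fun x : Fin k → ℕ => f (fun i => x (σ i)) := by
    funext x; apply Part.ext; intro y
    refine mem_pComp.trans ?_
    constructor
    · rintro ⟨z, hz, hy⟩
      have : z = fun i => x (σ i) := funext fun i => Part.mem_some_iff.1 (hz i)
      rwa [this] at hy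
    · intro hy
      exact ⟨fun i => x (σ i), fun i => Part.mem_some_iff.2 rfl, hy⟩
  rwa [e] at h


/-- Partial primitive recursion. -/
def pRecAux {k : ℕ} (f : (Fin k → ℕ) →. ℕ) (g : (Fin (k + 2) → ℕ) →. ℕ)
    (x : Fin k → ℕ) : ℕ → Part ℕ
  | 0 => f x
  | y + 1 => (pRecAux f g x y).bind fun z => g (Fin.snoc (Fin.snoc x y) z)

lemma primRecAux_dirac {k : ℕ} (f : (Fin k → ℕ) →. ℕ) (g : (Fin (k + 2) → ℕ) →. ℕ)
    (x : Fin k → ℕ) : ∀ y, primRecAux (Dirac f) (Dirac g) x y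
      = fun w => if w ∈ pRecAux f g x y then (1:ℝ) else 0
  | 0 => rfl
  | y + 1 => by
    funext w
    show (∑' z : ℕ, Dirac g (Fin.snoc (Fin.snoc x y) z) w
        * primRecAux (Dirac f) (Dirac g) x y z) = _
    rw [primRecAux_dirac f g x y]
    have step : ∀ z : ℕ, Dirac g (Fin.snoc (Fin.snoc x y) z) w
        * (if z ∈ pRecAux f g x y then (1:ℝ) else 0)
        = if (w ∈ g (Fin.snoc (Fin.snoc x y) z) ∧ z ∈ pRecAux f g x y) then (1:ℝ) else 0 := by
      intro z; simp only [Dirac]; rw [boole_mul_boole]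
    rw [tsum_congr step, tsum_boole']
    · congr 1
      rw [eq_iff_iff, pRecAux, Part.mem_bind_iff]
      constructor
      · rintro ⟨z, h1, h2⟩; exact ⟨z, h2, h1⟩
      · rintro ⟨z, h1, h2⟩; exact ⟨z, h2, h1⟩
    · rintro a b ⟨_, ha⟩ ⟨_, hb⟩
      exact Part.mem_unique ha hb

lemma PR_pRec {k : ℕ} {f : (Fin k → ℕ) →. ℕ} {g : (Fin (k + 2) → ℕ) →. ℕ}
    (hf : PR (Dirac f)) (hg : PR (Dirac g)) :
    PR (Dirac (fun v : Fin (k + 1) → ℕ => pRecAux f g (Fin.init v) (v (Fin.last k)))) := by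
  have h := PR.primrec hf hg
  have e : primRec (Dirac f) (Dirac g)
      = Dirac (fun v : Fin (k + 1) → ℕ => pRecAux f g (Fin.init v) (v (Fin.last k))) := by
    funext v
    show primRecAux (Dirac f) (Dirac g) (Fin.init v) (v (Fin.last k)) = _
    rw [primRecAux_dirac]; rfl
  rwa [e] at h


lemma minimize_total {k : ℕ} (t : (Fin (k + 1) → ℕ) → ℕ) :
    minimize (Dirac (fun w => Part.some (t w)))
      = Dirac (fun x : Fin k → ℕ =>
          Nat.rfind fun y => Part.some (decide (t (Fin.snoc x y) = 0))) := by
  funext x y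
  show (Dirac (fun w => Part.some (t w)) (Fin.snoc x y) 0) *
      (∏ z ∈ Finset.range y, ∑' m : {m : ℕ // 0 < m},
        Dirac (fun w => Part.some (t w)) (Fin.snoc x z) (m : ℕ)) = _
  have inner : ∀ z : ℕ,
      (∑' m : {m : ℕ // 0 < m}, Dirac (fun w => Part.some (t w)) (Fin.snoc x z) (m : ℕ))
        = if t (Fin.snoc x z) ≠ 0 then (1:ℝ) else 0 := by
    intro z
    have e1 : ∀ m : {m : ℕ // 0 < m}, Dirac (fun w => Part.some (t w)) (Fin.snoc x z) (m : ℕ)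
        = if ((m : ℕ) = t (Fin.snoc x z)) then (1:ℝ) else 0 := by
      intro m; simp [Dirac, Part.mem_some_iff]
    rw [tsum_congr e1, tsum_boole' _ (fun a b ha hb => Subtype.ext (ha.trans hb.symm))]
    congr 1
    rw [eq_iff_iff]
    constructor
    · rintro ⟨m, hm⟩; rw [← hm]; have := m.2; omega
    · intro h; exact ⟨⟨t (Fin.snoc x z), Nat.pos_of_ne_zero h⟩, rfl⟩
  have e2 : (∏ z ∈ Finset.range y, ∑' m : {m : ℕ // 0 < m},
        Dirac (fun w => Part.some (t w)) (Fin.snoc x z) (m : ℕ))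
      = if (∀ z ∈ Finset.range y, t (Fin.snoc x z) ≠ 0) then (1:ℝ) else 0 := by
    rw [Finset.prod_congr rfl (fun z _ => inner z), Finset.prod_boole]
  rw [e2]
  have e3 : Dirac (fun w => Part.some (t w)) (Fin.snoc x y) 0
      = if (0 = t (Fin.snoc x y)) then (1:ℝ) else 0 := by
    simp [Dirac, Part.mem_some_iff]
  rw [e3, boole_mul_boole]
  unfold Dirac
  congr 1
  rw [eq_iff_iff]
  refine Iff.trans ?_ Nat.mem_rfind.symm
  simp only [Part.mem_some_iff, Finset.mem_range]
  constructor
  · rintro ⟨h1, h2⟩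
    exact ⟨by simp [h1.symm], fun {m} hm => by simpa using (h2 m hm)⟩
  · rintro ⟨h1, h2⟩
    refine ⟨by simp at h1 ⊢; omega, fun m hm => ?_⟩
    · have := @h2 m hm; simpa using this


lemma PR_zero_arity0 : PR (Dirac (fun _ : Fin 0 → ℕ => Part.some 0)) := by
  have h0 : (fun (_ : Fin 1 → ℕ) (y : ℕ) => if y = 0 then (1 : ℝ) else 0)
      = Dirac (fun w : Fin 1 → ℕ => Part.some ((fun _ : Fin 1 → ℕ => (0:ℕ)) w)) := by
    funext x y; simp [Dirac, Part.mem_some_iff]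
  have h := PR.minim (k := 0) (h0 ▸ PR.zero)
  rw [minimize_total] at h
  have e : (fun x : Fin 0 → ℕ =>
        Nat.rfind fun y => Part.some (decide ((fun _ : Fin 1 → ℕ => (0:ℕ)) (Fin.snoc x y) = 0)))
      = fun _ : Fin 0 → ℕ => Part.some 0 := by
    funext x
    apply Part.ext; intro y
    refine Nat.mem_rfind.trans ?_
    simp only [Part.mem_some_iff, decide_eq_true_eq, decide_eq_false_iff_not]
    constructor
    · rintro ⟨-, h2⟩
      by_contra hy
      have := @h2 0 (Nat.pos_of_ne_zero fun h => hy h)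
      simp at this
    · rintro rfl
      exact ⟨rfl, fun {m} hm => absurd hm (Nat.not_lt_zero m)⟩
  rwa [e] at h

open Mathlib in
lemma prim_dirac {n : ℕ} {f : List.Vector ℕ n → ℕ} (hf : Nat.Primrec' f) :
    PR (Dirac (fun x : Fin n → ℕ => Part.some (f (List.Vector.ofFn x)))) := by
  induction hf with
  | zero => exact PR_zero_arity0
  | succ =>
    have e : Dirac (fun x : Fin 1 → ℕ => Part.some (Nat.succ (List.Vector.ofFn x).head))
        = fun (x : Fin 1 → ℕ) (y : ℕ) => if y = x 0 + 1 then (1 : ℝ) else 0 := by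
      funext x y; simp [Dirac, Part.mem_some_iff, List.Vector.head_ofFn]
    rw [e]; exact PR.succ
  | get i =>
    have e : Dirac (fun x : Fin _ → ℕ => Part.some ((List.Vector.ofFn x).get i))
        = fun (x : Fin _ → ℕ) (y : ℕ) => if y = x i then (1 : ℝ) else 0 := by
      funext x y; simp [Dirac, Part.mem_some_iff, List.Vector.get_ofFn]
    rw [e]; exact PR.proj i
  | @comp m nn fc g _ _ ihf ihg =>
    have h := PR_pComp (f := fun z : Fin nn → ℕ => Part.some (fc (List.Vector.ofFn z)))
      (g := fun i => fun x : Fin m → ℕ => Part.some (g i (List.Vector.ofFn x))) ihf ihg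
    have e : pComp (fun z : Fin nn → ℕ => Part.some (fc (List.Vector.ofFn z)))
        (fun i => fun x : Fin m → ℕ => Part.some (g i (List.Vector.ofFn x)))
        = fun x : Fin m → ℕ => Part.some (fc (List.Vector.ofFn fun i => g i (List.Vector.ofFn x))) := by
      funext x; apply Part.ext; intro y
      refine mem_pComp.trans ?_
      simp only [Part.mem_some_iff]
      constructor
      · rintro ⟨z, hz, rfl⟩
        exact congrArg (fun u => fc (List.Vector.ofFn u)) (funext hz)
      · rintro rfl
        exact ⟨fun i => g i (List.Vector.ofFn x), fun i => rfl, rfl⟩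
    rwa [e] at h
  | @prec nn fc g _ _ ihf ihg =>
    set σ : Fin (nn + 2) → Fin (nn + 2) :=
      Fin.cons ((Fin.last nn).castSucc)
        (Fin.cons (Fin.last (nn + 1)) (fun i : Fin nn => i.castSucc.castSucc)) with hσ
    set F : (Fin nn → ℕ) →. ℕ := fun z => Part.some (fc (List.Vector.ofFn z)) with hF
    set G : (Fin (nn + 2) → ℕ) →. ℕ :=
      fun w => Part.some (g (List.Vector.ofFn fun j => w (σ j))) with hG
    have hGpr : PR (Dirac G) := PR_reindex ihg σ
    have key : ∀ (x : Fin nn → ℕ) (a : ℕ), pRecAux F G x a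
        = Part.some (a.rec (fc (List.Vector.ofFn x))
            (fun y IH => g (y ::ᵥ IH ::ᵥ List.Vector.ofFn x)) : ℕ) := by
      intro x a
      induction a with
      | zero => rfl
      | succ a ih =>
        show (pRecAux F G x a).bind (fun z => G (Fin.snoc (Fin.snoc x a) z)) = _
        rw [ih, Part.bind_some]
        show Part.some _ = _
        congr 1
        set prev : ℕ := a.rec (fc (List.Vector.ofFn x)) (fun y IH => g (y ::ᵥ IH ::ᵥ List.Vector.ofFn x))
          with hprev
        set w : Fin (nn + 2) → ℕ := Fin.snoc (Fin.snoc x a) prev with hw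
        have e2 : (fun j => w (σ j))
            = fun j => ((a : ℕ) ::ᵥ prev ::ᵥ List.Vector.ofFn x).get j := by
          funext j
          refine Fin.cases ?_ (fun j1 => ?_) j
          · simp [hσ, hw, Fin.snoc_castSucc, Fin.snoc_last]
          · refine Fin.cases ?_ (fun j2 => ?_) j1
            · simp only [hσ, hw, Fin.cons_succ, Fin.cons_zero, Fin.snoc_last,
                List.Vector.get_cons_succ, List.Vector.get_cons_zero]
            · simp [hσ, hw, Fin.snoc_castSucc, List.Vector.get_ofFn]
        rw [congrArg List.Vector.ofFn e2, List.Vector.ofFn_get]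
    have h := PR_pRec (f := F) (g := G) ihf hGpr
    set τ : Fin (nn + 1) → Fin (nn + 1) := Fin.snoc Fin.succ 0 with hτ
    have h2 := PR_reindex h τ
    have e3 : (fun x : Fin (nn + 1) → ℕ =>
          (fun v : Fin (nn + 1) → ℕ => pRecAux F G (Fin.init v) (v (Fin.last nn)))
            (fun i => x (τ i)))
        = fun x : Fin (nn + 1) → ℕ => Part.some ((List.Vector.ofFn x).head.rec
            ((fun v => fc v) (List.Vector.ofFn x).tail)
            (fun y IH => g (y ::ᵥ IH ::ᵥ (List.Vector.ofFn x).tail)) : ℕ) := by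
      funext x
      have einit : Fin.init (fun i => x (τ i)) = fun j : Fin nn => x j.succ := by
        funext j
        show x (τ j.castSucc) = x j.succ
        rw [hτ, Fin.snoc_castSucc]
      have elast : (fun i => x (τ i)) (Fin.last nn) = x 0 := by
        show x (τ (Fin.last nn)) = x 0
        rw [hτ, Fin.snoc_last]
      show pRecAux F G (Fin.init (fun i => x (τ i))) ((fun i => x (τ i)) (Fin.last nn)) = _
      rw [einit, elast, key, List.Vector.head_ofFn, List.Vector.tail_ofFn]
    rw [e3] at h2
    exact h2


open Mathlib in
lemma mem_mOfFn_part : ∀ {n : ℕ} (g : Fin n → Part ℕ) (z : List.Vector ℕ n),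
    z ∈ List.Vector.mOfFn g ↔ ∀ i, z.get i ∈ g i := by
  intro n
  induction n with
  | zero =>
    intro g z
    constructor
    · intro _ i; exact i.elim0
    · intro _
      have : z = List.Vector.nil := by
        apply List.Vector.eq_nil
      rw [this]
      exact Part.mem_some _
  | succ n ih =>
    intro g z
    show z ∈ ((g 0).bind fun a => (List.Vector.mOfFn fun i => g i.succ).bind
      fun v => Part.some (a ::ᵥ v)) ↔ _
    simp only [Part.mem_bind_iff, Part.mem_some_iff]
    constructor
    · rintro ⟨a, ha, v, hv, rfl⟩
      intro i
      refine Fin.cases ?_ (fun i1 => ?_) i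
      · rwa [List.Vector.get_cons_zero]
      · rw [List.Vector.get_cons_succ]
        exact (ih _ v).1 hv i1
    · intro h
      refine ⟨z.head, ?_, z.tail, (ih _ z.tail).2 fun i => ?_, (z.cons_head_tail).symm⟩
      · rw [← List.Vector.get_zero]; exact h 0
      · rw [List.Vector.get_tail_succ]; exact h i.succ

open Mathlib in
lemma partrec'_dirac {n : ℕ} {f : List.Vector ℕ n →. ℕ} (hf : Nat.Partrec' f) :
    PR (Dirac (fun x : Fin n → ℕ => f (List.Vector.ofFn x))) := by
  induction hf with
  | prim h => exact prim_dirac h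
  | @comp m nn fc g _ _ ihf ihg =>
    have h := PR_pComp (f := fun z : Fin nn → ℕ => fc (List.Vector.ofFn z))
      (g := fun i => fun x : Fin m → ℕ => g i (List.Vector.ofFn x)) ihf ihg
    have e : pComp (fun z : Fin nn → ℕ => fc (List.Vector.ofFn z))
        (fun i => fun x : Fin m → ℕ => g i (List.Vector.ofFn x))
        = fun x : Fin m → ℕ => (List.Vector.mOfFn fun i => g i (List.Vector.ofFn x)) >>= fc := by
      funext x; apply Part.ext; intro y
      refine mem_pComp.trans ?_
      show _ ↔ y ∈ Part.bind (List.Vector.mOfFn fun i => g i (List.Vector.ofFn x)) fc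
      refine Iff.trans ?_ Part.mem_bind_iff.symm
      constructor
      · rintro ⟨z, hz, hy⟩
        refine ⟨List.Vector.ofFn z, (mem_mOfFn_part _ _).2 fun i => ?_, hy⟩
        rw [List.Vector.get_ofFn]; exact hz i
      · rintro ⟨zv, hzv, hy⟩
        refine ⟨zv.get, fun i => (mem_mOfFn_part _ _).1 hzv i, ?_⟩
        rwa [List.Vector.ofFn_get]
    rwa [e] at h
  | @rfind nn fc _ ih =>
    set σ : Fin (nn + 1) → Fin (nn + 1) := Fin.cons (Fin.last nn) Fin.castSucc with hσ
    set t : (Fin (nn + 1) → ℕ) → ℕ := fun w => fc (List.Vector.ofFn fun j => w (σ j)) with ht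
    have h2 : PR (Dirac (fun w : Fin (nn + 1) → ℕ => Part.some (t w))) := PR_reindex ih σ
    have h := PR.minim h2
    rw [minimize_total] at h
    have e : (fun x : Fin nn → ℕ =>
          Nat.rfind fun y => Part.some (decide (t (Fin.snoc x y) = 0)))
        = fun v : Fin nn → ℕ =>
          Nat.rfind fun a => Part.some (decide (fc (a ::ᵥ List.Vector.ofFn v) = 0)) := by
      funext x
      have e2 : ∀ y : ℕ, t (Fin.snoc x y) = fc (y ::ᵥ List.Vector.ofFn x) := by
        intro y
        set w : Fin (nn + 1) → ℕ := Fin.snoc x y with hw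
        rw [ht]
        have e3 : (fun j => w (σ j))
            = fun j => ((y : ℕ) ::ᵥ List.Vector.ofFn x).get j := by
          funext j
          refine Fin.cases ?_ (fun j1 => ?_) j
          · simp only [hσ, hw, Fin.cons_zero, Fin.snoc_last, List.Vector.get_cons_zero]
          · simp only [hσ, hw, Fin.cons_succ, Fin.snoc_castSucc, List.Vector.get_cons_succ,
              List.Vector.get_ofFn]
        show fc (List.Vector.ofFn fun j => w (σ j)) = _
        rw [congrArg List.Vector.ofFn e3, List.Vector.ofFn_get]
      simp only [e2]
    rw [e] at h
    exact h

/-- for every partial recursive function f : ℕ^k ⇀ ℕ, the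
probabilistic function p_f, with p_f(x⃗) the Dirac distribution on f(x⃗) when
f(x⃗) is defined and the empty distribution otherwise, is probabilistic recursive. -/
theorem partrec_dirac_mem_PR {k : ℕ} (f : (Fin k → ℕ) →. ℕ) (hf : Partrec f) :
    PR (fun (x : Fin k → ℕ) (y : ℕ) => if y ∈ f x then (1 : ℝ) else 0) := by
  have hf' : Partrec (fun v : List.Vector ℕ k => f v.get) :=
    hf.comp Primrec.vector_get'.to_comp
  have h := partrec'_dirac (Nat.Partrec'.part_iff.2 hf')
  have e : (fun x : Fin k → ℕ => (fun v : List.Vector ℕ k => f v.get) (List.Vector.ofFn x))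
      = f := by
    funext x
    show f (List.Vector.ofFn x).get = f x
    rw [funext fun i => List.Vector.get_ofFn x i]
  rw [e] at h
  exact h
end
end

section
/- The probabilistic function h : ℕ → 𝒫(ℕ) defined by h(x)(y) = 1/2^{y+1} for all x, y ∈ ℕ is probabilistic recursive; indeed h = μ(rand ⊙ Π²₁), where rand : ℕ → 𝒫(ℕ) is given by rand(x)(0) = rand(x)(1) = 1/2. -/
noncomputable section
open scoped Classical

/-- The probabilistic function rand, with rand(x)(0) = rand(x)(1) = 1/2
and rand(x)(y) = 0 for y > 1. -/
def rand : (Fin 1 → ℕ) → ℕ → ℝ :=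
  fun _ y => if y = 0 ∨ y = 1 then (1 : ℝ) / 2 else 0

/-- The projection Π²₁. -/
def proj21 : (Fin 2 → ℕ) → ℕ → ℝ :=
  fun x y => if y = x 0 then (1 : ℝ) else 0

lemma rand_eq_comp :
    rand = genComp (fun (x : Fin 1 → ℕ) (y : ℕ) => if y = x 0 ∨ y = x 0 + 1 then (1 : ℝ) / 2 else 0)
      (fun _ : Fin 1 => fun (_ : Fin 1 → ℕ) (y : ℕ) => if y = 0 then (1 : ℝ) else 0) := by
  funext x y
  unfold rand genComp
  rw [show ∀ F : (Fin 1 → ℕ) → ℝ, (∑' z : Fin 1 → ℕ, F z) = ∑' z : Fin 1 → ℕ, F z from fun _ => rfl]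
  rw [tsum_eq_single (fun _ : Fin 1 => 0) ?_]
  · simp
  · intro z hz
    have h0 : z 0 ≠ 0 := by
      intro h; apply hz; funext i; have : i = 0 := Subsingleton.elim _ _; rw [this, h]
    simp [h0]

lemma rand_PR : PR rand := by
  rw [rand_eq_comp]
  exact PR.comp PR.coin (fun _ => PR.zero)

lemma gc_eq : genComp rand (fun _ : Fin 1 => proj21) =
    fun (x : Fin 2 → ℕ) (y : ℕ) => if y = 0 ∨ y = 1 then (1 : ℝ) / 2 else 0 := by
  funext x y
  unfold genComp rand proj21
  rw [tsum_eq_single (fun _ : Fin 1 => x 0) ?_]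
  · simp
  · intro z hz
    have h0 : z 0 ≠ x 0 := by
      intro h; apply hz; funext i; have : i = 0 := Subsingleton.elim _ _; rw [this, h]
    simp [h0]

/-- the probabilistic function h(x)(y) = 1/2^(y+1) is probabilistic
recursive; indeed h = μ(rand ⊙ Π²₁). -/
theorem half_pow_mem_PR :
    PR (fun (_ : Fin 1 → ℕ) (y : ℕ) => (1 : ℝ) / 2 ^ (y + 1)) ∧
    minimize (k := 1) (genComp rand (fun _ : Fin 1 => proj21)) =
      (fun (_ : Fin 1 → ℕ) (y : ℕ) => (1 : ℝ) / 2 ^ (y + 1)) := by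
  have hmin : minimize (k := 1) (genComp rand (fun _ : Fin 1 => proj21)) =
      (fun (_ : Fin 1 → ℕ) (y : ℕ) => (1 : ℝ) / 2 ^ (y + 1)) := by
    rw [gc_eq]
    funext x y
    unfold minimize
    have hsum :
        (∑' m : {m : ℕ // 0 < m},
          (if (m : ℕ) = 0 ∨ (m : ℕ) = 1 then (1 : ℝ) / 2 else 0)) = 1 / 2 := by
      rw [tsum_eq_single (⟨1, one_pos⟩ : {m : ℕ // 0 < m}) ?_]
      · simp
      · rintro ⟨m, hm⟩ h
        have hm0 : m ≠ 0 := Nat.pos_iff_ne_zero.mp hm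
        have hm1 : m ≠ 1 := by intro h1; apply h; ext; exact h1
        simp [hm0, hm1]
    simp only [hsum, Finset.prod_const, Finset.card_range]
    norm_num [pow_succ]
    ring_nf
    simp only [one_div]
  refine ⟨?_, hmin⟩
  rw [← hmin]
  exact PR.minim (PR.comp rand_PR (fun _ => PR.proj 0))
end
end

section
/- The probabilistic function f : ℕ → 𝒫(ℕ) defined by f(x)(y) = 1/2^{y−x+1} if y ≥ x and f(x)(y) = 0 otherwise, is probabilistic recursive. -/
noncomputable section
open scoped Classical

section Aux

open scoped Classical

/-- 2-ary version of the zero function. -/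
noncomputable def zero2 : (Fin 2 → ℕ) → ℕ → ℝ :=
  genComp (fun (_ : Fin 1 → ℕ) (y : ℕ) => if y = 0 then (1 : ℝ) else 0)
    (fun _ => fun (x : Fin 2 → ℕ) (y : ℕ) => if y = x 0 then (1 : ℝ) else 0)

lemma PR_zero2 : PR zero2 := PR.comp PR.zero (fun _ => PR.proj 0)

lemma zero2_eq (x : Fin 2 → ℕ) (y : ℕ) :
    zero2 x y = if y = 0 then 1 else 0 := by
  unfold zero2 genComp
  rw [tsum_eq_single (fun _ : Fin 1 => x 0)]
  · simp
  · intro z hz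
    have h0 : z 0 ≠ x 0 := by
      intro h
      exact hz (funext fun i => by rw [Subsingleton.elim i 0, h])
    simp [Fin.prod_univ_one, h0]

/-- 2-ary coin at 0 : 1/2 on {0,1}. -/
noncomputable def coin2 : (Fin 2 → ℕ) → ℕ → ℝ :=
  genComp (fun (x : Fin 1 → ℕ) (y : ℕ) =>
      if y = x 0 ∨ y = x 0 + 1 then (1 : ℝ) / 2 else 0)
    (fun _ => zero2)

lemma PR_coin2 : PR coin2 := PR.comp PR.coin (fun _ => PR_zero2)

lemma coin2_eq (x : Fin 2 → ℕ) (y : ℕ) :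
    coin2 x y = if y = 0 ∨ y = 1 then 1 / 2 else 0 := by
  unfold coin2 genComp
  rw [tsum_eq_single (fun _ : Fin 1 => 0)]
  · simp [Fin.prod_univ_one, zero2_eq]
  · intro z hz
    have h0 : z 0 ≠ 0 := by
      intro h
      exact hz (funext fun i => by rw [Subsingleton.elim i 0, h])
    simp [Fin.prod_univ_one, zero2_eq, h0]

lemma geom_eq (x : Fin 1 → ℕ) (y : ℕ) :
    minimize coin2 x y = 1 / 2 ^ (y + 1) := by
  unfold minimize
  have h0 : coin2 (Fin.snoc x y) 0 = 1 / 2 := by simp [coin2_eq]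
  have h1 : ∀ z : ℕ,
      (∑' m : {m : ℕ // 0 < m}, coin2 (Fin.snoc x z) (m : ℕ)) = 1 / 2 := by
    intro z
    rw [tsum_eq_single (⟨1, one_pos⟩ : {m : ℕ // 0 < m})]
    · simp [coin2_eq]
    · intro m hm
      have hm0 : (m : ℕ) ≠ 0 := Nat.pos_iff_ne_zero.mp m.2
      have hm1 : (m : ℕ) ≠ 1 := fun h => hm (Subtype.ext h)
      simp [coin2_eq, hm0, hm1]
  rw [h0]
  simp only [h1, Finset.prod_const, Finset.card_range]
  rw [div_pow, one_pow, pow_succ]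
  ring

/-- Successor of the last of three arguments. -/
noncomputable def succ3 : (Fin 3 → ℕ) → ℕ → ℝ :=
  genComp (fun (x : Fin 1 → ℕ) (y : ℕ) => if y = x 0 + 1 then (1 : ℝ) else 0)
    (fun _ => fun (x : Fin 3 → ℕ) (y : ℕ) => if y = x 2 then (1 : ℝ) else 0)

lemma PR_succ3 : PR succ3 := PR.comp PR.succ (fun _ => PR.proj 2)

lemma succ3_eq (v : Fin 3 → ℕ) (y : ℕ) :
    succ3 v y = if y = v 2 + 1 then 1 else 0 := by
  unfold succ3 genComp
  rw [tsum_eq_single (fun _ : Fin 1 => v 2)]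
  · simp
  · intro z hz
    have h0 : z 0 ≠ v 2 := by
      intro h
      exact hz (funext fun i => by rw [Subsingleton.elim i 0, h])
    simp [Fin.prod_univ_one, h0]

/-- Addition as a probabilistic (Dirac) function. -/
noncomputable def addF : (Fin 2 → ℕ) → ℕ → ℝ :=
  primRec (fun (x : Fin 1 → ℕ) (y : ℕ) => if y = x 0 then (1 : ℝ) else 0) succ3

lemma PR_addF : PR addF := PR.primrec (PR.proj 0) PR_succ3

lemma addAux_eq (x : Fin 1 → ℕ) (y w : ℕ) :
    primRecAux (fun (x : Fin 1 → ℕ) (y : ℕ) => if y = x 0 then (1 : ℝ) else 0)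
      succ3 x y w = if w = x 0 + y then 1 else 0 := by
  induction y generalizing w with
  | zero => simp [primRecAux]
  | succ y ih =>
    have h2 : (2 : Fin 3) = Fin.last 2 := rfl
    simp only [primRecAux, succ3_eq, ih, h2, Fin.snoc_last]
    rw [tsum_eq_single (x 0 + y)]
    · have h3 : x 0 + (y + 1) = x 0 + y + 1 := rfl
      rw [h3]
      simp
    · intro z hz
      simp [hz]

lemma addF_eq (v : Fin 2 → ℕ) (y : ℕ) :
    addF v y = if y = v 0 + v 1 then 1 else 0 := by
  unfold addF primRec
  rw [addAux_eq]
  rfl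

end Aux

/-- the probabilistic function f(x)(y) = 1/2^(y−x+1) for y ≥ x
(and 0 otherwise) is probabilistic recursive. -/
theorem shifted_geometric_mem_PR :
    PR (fun (x : Fin 1 → ℕ) (y : ℕ) =>
      if x 0 ≤ y then (1 : ℝ) / 2 ^ (y - x 0 + 1) else 0) := by
  have hmain :
      (fun (x : Fin 1 → ℕ) (y : ℕ) =>
        if x 0 ≤ y then (1 : ℝ) / 2 ^ (y - x 0 + 1) else 0) =
      genComp addF
        ![fun (x : Fin 1 → ℕ) (y : ℕ) => if y = x 0 then (1 : ℝ) else 0,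
          minimize coin2] := by
    funext x y
    unfold genComp
    rw [tsum_eq_single ![x 0, y - x 0]]
    · simp only [Fin.prod_univ_two, Matrix.cons_val_zero, Matrix.cons_val_one,
        Matrix.head_cons, addF_eq, geom_eq, if_pos rfl, one_mul]
      by_cases h : x 0 ≤ y
      · have hy : y = x 0 + (y - x 0) := (Nat.add_sub_cancel' h).symm
        rw [if_pos h]
        simp [Nat.add_sub_cancel' h]
      · have hy : y ≠ x 0 + (y - x 0) := by omega
        rw [if_neg h]
        simp [hy]
    · intro z hz
      simp only [Fin.prod_univ_two, Matrix.cons_val_zero, Matrix.cons_val_one,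
        Matrix.head_cons, addF_eq, geom_eq]
      rcases eq_or_ne (z 0) (x 0) with h0 | h0
      · rcases eq_or_ne y (z 0 + z 1) with h1 | h1
        · exfalso
          apply hz
          funext i
          fin_cases i
          · show z 0 = x 0
            exact h0
          · show z 1 = y - x 0
            omega
        · simp [h1]
      · simp [h0]
  rw [hmain]
  refine PR.comp PR_addF ?_
  intro i
  fin_cases i
  · exact PR.proj 0
  · exact PR.minim PR_coin2
end
end
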